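/- Let R, S be complex m × m matrices whose pencil is regular, i.e., det(αR + βS) ≠ 0 for some (α, β) ∈ ℂ². Let (a b; c d) be an invertible 2 × 2 complex matrix and set R' = aR + cS, S' = bR + dS. Let f(t) = det(tR + S) and g(t) = det(tR' + S'), polynomials in t. Then g is not the zero polynomial, and for every x ∈ ℂ with cx + d ≠ 0, the multiplicity of x as a root of g equals the multiplicity of y = (ax + b)/(cx + d) as a root of f. (Finite elementary divisor degrees of a regular pencil are preserved under Alice's action, with the associated eigenvalues transformed by the linear fractional transformation.) -/

import Mathlib

open Matrix Polynomial


lemma aux_eval_det (m : ℕ) (P Q : Matrix (Fin m) (Fin m) ℂ) (t : ℂ) :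
    Polynomial.eval t (Matrix.det ((X : ℂ[X]) • P.map Polynomial.C + Q.map Polynomial.C))
      = Matrix.det (t • P + Q) := by
  have h := RingHom.map_det (Polynomial.evalRingHom t)
    ((X : ℂ[X]) • P.map Polynomial.C + Q.map Polynomial.C)
  simp only [coe_evalRingHom] at h
  rw [show Polynomial.eval t (Matrix.det ((X : ℂ[X]) • P.map Polynomial.C + Q.map Polynomial.C))
      = _ from h]
  congr 1
  ext i j
  simp only [RingHom.mapMatrix_apply, Matrix.map_apply, Matrix.add_apply, Matrix.smul_apply, smul_eq_mul, coe_evalRingHom, eval_add, eval_mul, eval_X, eval_C]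

lemma aux_scale (m : ℕ) (P Q : Matrix (Fin m) (Fin m) ℂ) (u v : ℂ) (hv : v ≠ 0) :
    Matrix.det (u • P + v • Q) = v ^ m * Matrix.det ((u / v) • P + Q) := by
  have h1 : u • P + v • Q = v • ((u / v) • P + Q) := by
    rw [smul_add, smul_smul]
    congr 2
    field_simp
  rw [h1, Matrix.det_smul]
  simp

lemma aux_ne_zero (m : ℕ) (P Q : Matrix (Fin m) (Fin m) ℂ)
    (h : ∃ α β : ℂ, (α • P + β • Q).det ≠ 0) :
    Matrix.det ((X : ℂ[X]) • P.map Polynomial.C + Q.map Polynomial.C) ≠ 0 := by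
  intro h0
  obtain ⟨α, β, hab⟩ := h
  have hz : ∀ t : ℂ, Matrix.det (t • P + Q) = 0 := by
    intro t
    rw [← aux_eval_det, h0, eval_zero]
  apply hab
  rcases eq_or_ne β 0 with hβ | hβ
  · -- need det (α • P) = 0 ; use reversed polynomial
    have hq : Matrix.det ((X : ℂ[X]) • Q.map Polynomial.C + P.map Polynomial.C) = 0 := by
      apply Polynomial.eq_zero_of_infinite_isRoot
      apply Set.Infinite.mono (s := {(0 : ℂ)}ᶜ)
      · intro t ht
        simp only [Set.mem_compl_iff, Set.mem_singleton_iff] at ht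
        simp only [Set.mem_setOf_eq, IsRoot, aux_eval_det]
        rw [show t • Q + P = (1 : ℂ) • P + t • Q by rw [one_smul]; abel,
          aux_scale m P Q 1 t ht, hz, mul_zero]
      · exact (Set.finite_singleton (0 : ℂ)).infinite_compl
    have hP : Matrix.det P = 0 := by
      have := aux_eval_det m Q P 0
      rw [hq, eval_zero] at this
      simpa using this.symm
    have : Matrix.det (α • P + β • Q) = α ^ m * Matrix.det P := by
      rw [hβ, zero_smul, add_zero, Matrix.det_smul]
      simp
    rw [this, hP, mul_zero]
  · rw [show α • P + β • Q = α • P + β • Q from rfl, aux_scale m P Q α β hβ, hz, mul_zero]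

lemma aux_L1 (a b c d : ℂ) (p : ℂ[X]) (n : ℕ) (hp : p.natDegree ≤ n) (t : ℂ)
    (ht : c * t + d ≠ 0) :
    Polynomial.eval t (∑ i ∈ Finset.range (n + 1),
        Polynomial.C (p.coeff i) * (Polynomial.C a * X + Polynomial.C b) ^ i
          * (Polynomial.C c * X + Polynomial.C d) ^ (n - i))
      = (c * t + d) ^ n * p.eval ((a * t + b) / (c * t + d)) := by
  rw [Polynomial.eval_finset_sum, Polynomial.eval_eq_sum_range' (Nat.lt_succ_of_le hp),
    Finset.mul_sum]
  apply Finset.sum_congr rfl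
  intro i hi
  have hi' : i ≤ n := Nat.lt_succ_iff.mp (Finset.mem_range.mp hi)
  simp only [eval_mul, eval_pow, eval_add, eval_C, eval_X]
  rw [div_pow, show (c * t + d) ^ n = (c * t + d) ^ (n - i) * (c * t + d) ^ i by
    rw [← pow_add]; congr 1; omega]
  have ht' : t * c + d ≠ 0 := by rwa [mul_comm t c]
  field_simp

lemma aux_inf (c d : ℂ) (hcd : ¬(c = 0 ∧ d = 0)) : {t : ℂ | c * t + d ≠ 0}.Infinite := by
  have hfin : {t : ℂ | c * t + d = 0}.Finite := by
    rcases eq_or_ne c 0 with hc | hc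
    · have hd : d ≠ 0 := fun h => hcd ⟨hc, h⟩
      have : {t : ℂ | c * t + d = 0} = ∅ := by
        ext t; simp [hc, hd]
      rw [this]; exact Set.finite_empty
    · apply Set.Finite.subset (Set.finite_singleton (-d / c))
      intro t ht
      simp only [Set.mem_setOf_eq] at ht
      simp only [Set.mem_singleton_iff]
      field_simp
      linear_combination ht
  simpa [Set.compl_setOf] using hfin.infinite_compl

/-- For a regular pencil `μR + λS` and Alice's action `(R, S) ↦ (R', S') = (aR + cS, bR + dS)`
with `ad − bc ≠ 0`, the polynomial `g(t) = det(tR' + S')` is nonzero and, for every `x` with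
`cx + d ≠ 0`, the multiplicity of `x` as a root of `g` equals the multiplicity of
`y = (ax + b)/(cx + d)` as a root of `f(t) = det(tR + S)`. -/
theorem regular_pencil_root_multiplicity (m : ℕ)
    (R S : Matrix (Fin m) (Fin m) ℂ)
    (hreg : ∃ α β : ℂ, (α • R + β • S).det ≠ 0)
    (a b c d : ℂ) (hA : a * d - b * c ≠ 0) :
    (Matrix.det ((X : ℂ[X]) • (a • R + c • S).map Polynomial.C
          + (b • R + d • S).map Polynomial.C) ≠ 0)
      ∧ ∀ x : ℂ, c * x + d ≠ 0 →
          Polynomial.rootMultiplicity x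
              (Matrix.det ((X : ℂ[X]) • (a • R + c • S).map Polynomial.C
                + (b • R + d • S).map Polynomial.C))
            = Polynomial.rootMultiplicity ((a * x + b) / (c * x + d))
                (Matrix.det ((X : ℂ[X]) • R.map Polynomial.C + S.map Polynomial.C)) := by
  obtain ⟨α, β, hab⟩ := hreg
  set f : ℂ[X] := Matrix.det ((X : ℂ[X]) • R.map Polynomial.C + S.map Polynomial.C) with hf_def
  set R' := a • R + c • S with hR'
  set S' := b • R + d • S with hS'
  set g : ℂ[X] := Matrix.det ((X : ℂ[X]) • R'.map Polynomial.C + S'.map Polynomial.C) with hg_def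
  have hcd : ¬(c = 0 ∧ d = 0) := by
    rintro ⟨hc, hd⟩
    apply hA
    rw [hc, hd]; ring
  have hinf := aux_inf c d hcd
  -- f is nonzero
  have hf : f ≠ 0 := aux_ne_zero m R S ⟨α, β, hab⟩
  -- g is nonzero
  have hg : g ≠ 0 := by
    apply aux_ne_zero m R' S'
    refine ⟨((d * α - b * β) / (a * d - b * c)), ((a * β - c * α) / (a * d - b * c)), ?_⟩
    have : ((d * α - b * β) / (a * d - b * c)) • R' + ((a * β - c * α) / (a * d - b * c)) • S'
        = α • R + β • S := by
      rw [hR', hS', smul_add, smul_add, smul_smul, smul_smul, smul_smul, smul_smul,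
        add_add_add_comm, ← add_smul, ← add_smul]
      have hA' : d * a - b * c ≠ 0 := by rwa [mul_comm d a]
      congr 1 <;> congr 1 <;> field_simp <;> ring
    rw [this]
    exact hab
  -- degree bound for f
  have hdf : f.natDegree ≤ m := by
    have := Polynomial.natDegree_det_X_add_C_le R S
    simpa using this
  -- g equals the homogenized substitution of f
  have hgPhi : g = ∑ i ∈ Finset.range (m + 1),
      Polynomial.C (f.coeff i) * (Polynomial.C a * X + Polynomial.C b) ^ i
        * (Polynomial.C c * X + Polynomial.C d) ^ (m - i) := by
    apply Polynomial.eq_of_infinite_eval_eq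
    apply hinf.mono
    intro t ht
    simp only [Set.mem_setOf_eq] at ht ⊢
    rw [hg_def, aux_eval_det, aux_L1 a b c d f m hdf t ht]
    have h1 : t • R' + S' = (a * t + b) • R + (c * t + d) • S := by
      rw [hR', hS', smul_add, smul_smul, smul_smul]
      rw [add_add_add_comm, ← add_smul, ← add_smul]
      congr 1 <;> congr 1 <;> ring
    rw [h1, aux_scale m R S _ _ ht, ← aux_eval_det m R S]
  refine ⟨hg, ?_⟩
  intro x hx
  set y : ℂ := (a * x + b) / (c * x + d) with hy_def
  set k : ℕ := f.rootMultiplicity y with hk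
  set h : ℂ[X] := f /ₘ (X - Polynomial.C y) ^ k with hh
  have hfac : (X - Polynomial.C y) ^ k * h = f :=
    Polynomial.pow_mul_divByMonic_rootMultiplicity_eq f y
  have hh0 : h ≠ 0 := by
    intro h0
    rw [h0, mul_zero] at hfac
    exact hf hfac.symm
  have hhy : h.eval y ≠ 0 := Polynomial.eval_divByMonic_pow_rootMultiplicity_ne_zero y hf
  have hXy : ((X : ℂ[X]) - Polynomial.C y) ^ k ≠ 0 :=
    pow_ne_zero _ (Polynomial.X_sub_C_ne_zero y)
  have hnd : f.natDegree = k + h.natDegree := by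
    rw [← hfac, Polynomial.natDegree_mul hXy hh0, Polynomial.natDegree_pow,
      Polynomial.natDegree_X_sub_C, mul_one]
  have hkm : k ≤ m := by omega
  have hdh : h.natDegree ≤ m - k := by omega
  have hy : y * (c * x + d) = a * x + b := by
    have hx' : x * c + d ≠ 0 := by rwa [mul_comm x c]
    rw [hy_def]; field_simp
  have hane : a - y * c ≠ 0 := by
    intro h0
    apply hA
    have h1 : (a - y * c) * (c * x + d) = a * d - b * c := by linear_combination (-c) * hy
    rw [h0, zero_mul] at h1
    exact h1.symm
  clear_value y k h
  -- factorization of the substituted polynomial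
  have hfPhi : (∑ i ∈ Finset.range (m + 1),
      Polynomial.C (f.coeff i) * (Polynomial.C a * X + Polynomial.C b) ^ i
        * (Polynomial.C c * X + Polynomial.C d) ^ (m - i))
      = (Polynomial.C (a - y * c) * (X - Polynomial.C x)) ^ k
        * ∑ i ∈ Finset.range ((m - k) + 1),
            Polynomial.C (h.coeff i) * (Polynomial.C a * X + Polynomial.C b) ^ i
              * (Polynomial.C c * X + Polynomial.C d) ^ ((m - k) - i) := by
    apply Polynomial.eq_of_infinite_eval_eq
    apply hinf.mono
    intro t ht
    simp only [Set.mem_setOf_eq] at ht ⊢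
    rw [aux_L1 a b c d f m hdf t ht, Polynomial.eval_mul, Polynomial.eval_pow,
      aux_L1 a b c d h (m - k) hdh t ht]
    simp only [eval_mul, eval_sub, eval_add, eval_C, eval_X]
    have hfev : f.eval ((a * t + b) / (c * t + d))
        = ((a * t + b) / (c * t + d) - y) ^ k * h.eval ((a * t + b) / (c * t + d)) := by
      conv_lhs => rw [← hfac]
      simp [Polynomial.eval_mul, Polynomial.eval_pow]
    rw [hfev]
    have h3 : (a * t + b) / (c * t + d) * (c * t + d) = a * t + b := div_mul_cancel₀ _ ht
    have key : ((a * t + b) / (c * t + d) - y) * (c * t + d) = (a - y * c) * (t - x) := by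
      linear_combination h3 - hy
    rw [show ((a - y * c) * (t - x)) ^ k
        = ((a * t + b) / (c * t + d) - y) ^ k * (c * t + d) ^ k by rw [← mul_pow, key]]
    rw [show (c * t + d) ^ m = (c * t + d) ^ k * (c * t + d) ^ (m - k) by
      rw [← pow_add]; congr 1; omega]
    ring
  -- identify L with C(a-yc)(X - Cx) and compute multiplicities
  have hHx : Polynomial.eval x (∑ i ∈ Finset.range ((m - k) + 1),
      Polynomial.C (h.coeff i) * (Polynomial.C a * X + Polynomial.C b) ^ i
        * (Polynomial.C c * X + Polynomial.C d) ^ ((m - k) - i)) ≠ 0 := by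
    rw [aux_L1 a b c d h (m - k) hdh x hx, ← hy_def]
    exact mul_ne_zero (pow_ne_zero _ hx) hhy
  rw [hgPhi, hfPhi]
  have hLk : (Polynomial.C (a - y * c) * (X - Polynomial.C x)) ^ k
      = Polynomial.C ((a - y * c) ^ k) * (X - Polynomial.C x) ^ k := by
    rw [mul_pow, map_pow]
  have hne1 : Polynomial.C ((a - y * c) ^ k) * (X - Polynomial.C x) ^ k ≠ 0 :=
    mul_ne_zero (Polynomial.C_ne_zero.mpr (pow_ne_zero k hane))
      (pow_ne_zero _ (Polynomial.X_sub_C_ne_zero x))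
  have hH0 : (∑ i ∈ Finset.range ((m - k) + 1),
      Polynomial.C (h.coeff i) * (Polynomial.C a * X + Polynomial.C b) ^ i
        * (Polynomial.C c * X + Polynomial.C d) ^ ((m - k) - i)) ≠ 0 := by
    intro h0
    rw [h0, Polynomial.eval_zero] at hHx
    exact hHx rfl
  rw [hLk]
  rw [Polynomial.rootMultiplicity_mul (mul_ne_zero hne1 hH0)]
  rw [Polynomial.rootMultiplicity_mul hne1]
  rw [Polynomial.rootMultiplicity_C, Polynomial.rootMultiplicity_X_sub_C_pow,
    Polynomial.rootMultiplicity_eq_zero (by simpa [Polynomial.IsRoot] using hHx)]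
  omega
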